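/- Let 𝔨 be the 6-dimensional Lie algebra with basis e₁,…,e₆ and nonzero brackets [e₁,e₄]=e₆, [e₁,e₆]=−e₂, [e₃,e₄]=−e₁, [e₃,e₅]=−e₂, [e₄,e₆]=−e₅. Define α: 𝔨 → 𝔰𝔩(4,ℝ) by α(x₁e₁+⋯+x₆e₆) = the strictly lower triangular 4×4 matrix with rows (0,0,0,0), (x₃,0,0,0), (x₁,x₄,0,0), (x₂,x₅,x₆,0). Then for all x,y ∈ 𝔨, the curvature [α(x),α(y)] − α([x,y]) equals −(x₁y₄ − x₄y₁)·E₄₃, where E₄₃ is the elementary matrix with 1 in position (4,3). -/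

import Mathlib

open Matrix

noncomputable section

/-- The bracket on ℝ⁶ (coordinates w.r.t. the basis e₁,…,e₆) determined by
[e₁,e₄]=e₆, [e₁,e₆]=−e₂, [e₃,e₄]=−e₁, [e₃,e₅]=−e₂, [e₄,e₆]=−e₅. -/
def br6 (x y : Fin 6 → ℝ) : Fin 6 → ℝ :=
  ![-(x 2 * y 3 - x 3 * y 2),
    -(x 0 * y 5 - x 5 * y 0) - (x 2 * y 4 - x 4 * y 2),
    0,
    0,
    -(x 3 * y 5 - x 5 * y 3),
    (x 0 * y 3 - x 3 * y 0)]

/-- The extension α : 𝔨 → 𝔰𝔩(4,ℝ). -/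
def α6 (x : Fin 6 → ℝ) : Matrix (Fin 4) (Fin 4) ℝ :=
  !![0, 0, 0, 0;
     x 2, 0, 0, 0;
     x 0, x 3, 0, 0;
     x 1, x 4, x 5, 0]


@[simp] lemma vec6_four {α : Type*} (a b c d e f : α) : ![a,b,c,d,e,f] 4 = e := rfl
@[simp] lemma vec6_five {α : Type*} (a b c d e f : α) : ![a,b,c,d,e,f] 5 = f := rfl

theorem stmt12 :
    -- the bracket is a Lie bracket: antisymmetry and the Jacobi identity
    (∀ x y, br6 x y = -(br6 y x)) ∧
    (∀ x y z, br6 (br6 x y) z + br6 (br6 y z) x + br6 (br6 z x) y = 0) ∧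
    -- the curvature of α
    (∀ x y : Fin 6 → ℝ,
      α6 x * α6 y - α6 y * α6 x - α6 (br6 x y)
        = (-(x 0 * y 3 - x 3 * y 0)) • Matrix.single (3 : Fin 4) (2 : Fin 4) (1 : ℝ)) := by
  refine ⟨fun x y => ?_, fun x y z => ?_, fun x y => ?_⟩
  · funext i; fin_cases i <;> simp [br6, Matrix.cons_val_succ] <;> ring
  · funext i; fin_cases i <;> simp [br6, Matrix.cons_val_succ] <;> ring
  · ext i j
    fin_cases i <;> fin_cases j <;>
      · simp only [α6, br6, Matrix.mul_apply, Fin.sum_univ_four, Matrix.single,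
          Matrix.sub_apply, Matrix.smul_apply, Matrix.cons_val', Matrix.cons_val_zero,
          Matrix.cons_val_one, Matrix.head_cons, Matrix.head_fin_const, Matrix.empty_val',
          Matrix.cons_val_fin_one, Matrix.of_apply, vec6_four, vec6_five,
          Matrix.cons_val_two, Matrix.cons_val_three, Matrix.tail_cons, smul_eq_mul]
        norm_num [Fin.ext_iff, show ((3:Fin 4):ℕ) = 3 from rfl]
        try ring
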